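/- Let V be a metric 3-Lie algebra and I ⊆ V an ideal. Then: (1) the orthogonal complement I⊥ is an ideal of V; (2) I⊥ centralises I, i.e. [u,v,x] = 0 whenever u ∈ I⊥, v ∈ I and x ∈ V; (3) if I is a minimal ideal (I ≠ 0 and every ideal contained in I equals 0 or I), then I⊥ is a maximal ideal (every ideal containing I⊥ equals I⊥ or V). -/

import Mathlib

theorem metric_threeLie_orth_ideal_aux
    {V : Type*} [AddCommGroup V] [Module ℝ V]
    (f : V →ₗ[ℝ] V →ₗ[ℝ] V →ₗ[ℝ] V)
    (hA1 : ∀ x y z : V, f x y z = - f y x z)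
    (hA2 : ∀ x y z : V, f x y z = - f x z y)
    (ip : V →ₗ[ℝ] V →ₗ[ℝ] ℝ)
    (hipsymm : ∀ u v : V, ip u v = ip v u)
    (hipinv : ∀ x y z s : V, ip (f x y z) s + ip z (f x y s) = 0)
    (J : Submodule ℝ V)
    (hJ : ∀ x ∈ J, ∀ y z : V, f x y z ∈ J) :
    ∀ x ∈ LinearMap.BilinForm.orthogonal ip J, ∀ y z : V,
      f x y z ∈ LinearMap.BilinForm.orthogonal ip J := by
  have cyc : ∀ a b c : V, f a b c = f b c a := by
    intro a b c
    rw [hA1 a b c, hA2 b a c, neg_neg]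
  intro x hx y z
  rw [LinearMap.BilinForm.mem_orthogonal_iff]
  intro n hn
  have h2 : f y z n ∈ J := by
    have h3 : f n y z ∈ J := hJ n hn y z
    rwa [cyc n y z] at h3
  have h4 : ip (f y z n) x = 0 := hx _ h2
  have h5 := hipinv y z x n
  have h6 := hipsymm x (f y z n)
  have h7 := hipsymm n (f x y z)
  have h8 : f x y z = f y z x := cyc x y z
  show ip n (f x y z) = 0
  rw [h7, h8]
  linarith

/-- In a metric 3-Lie algebra: the orthogonal complement of an ideal is an ideal, the
orthogonal complement of an ideal centralises the ideal, and the orthogonal complement of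
a minimal ideal is a maximal ideal. -/
theorem metric_threeLie_ideal_orthogonal
    (V : Type*) [AddCommGroup V] [Module ℝ V] [FiniteDimensional ℝ V]
    (f : V →ₗ[ℝ] V →ₗ[ℝ] V →ₗ[ℝ] V)
    (hA1 : ∀ x y z : V, f x y z = - f y x z)
    (hA2 : ∀ x y z : V, f x y z = - f x z y)
    (hFI : ∀ x y z s t : V,
      f x y (f z s t) = f (f x y z) s t + f z (f x y s) t + f z s (f x y t))
    (ip : V →ₗ[ℝ] V →ₗ[ℝ] ℝ)
    (hipsymm : ∀ u v : V, ip u v = ip v u)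
    (hipnondeg : ∀ u : V, (∀ v : V, ip u v = 0) → u = 0)
    (hipinv : ∀ x y z s : V, ip (f x y z) s + ip z (f x y s) = 0)
    (I : Submodule ℝ V)
    (hI : ∀ x ∈ I, ∀ y z : V, f x y z ∈ I) :
    (∀ x ∈ LinearMap.BilinForm.orthogonal ip I, ∀ y z : V,
        f x y z ∈ LinearMap.BilinForm.orthogonal ip I) ∧
    (∀ u ∈ LinearMap.BilinForm.orthogonal ip I, ∀ v ∈ I, ∀ x : V, f u v x = 0) ∧
    ((I ≠ ⊥ ∧ ∀ J : Submodule ℝ V, (∀ x ∈ J, ∀ y z : V, f x y z ∈ J) → J ≤ I →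
        J = ⊥ ∨ J = I) →
      ∀ J : Submodule ℝ V, (∀ x ∈ J, ∀ y z : V, f x y z ∈ J) →
        LinearMap.BilinForm.orthogonal ip I ≤ J →
        J = LinearMap.BilinForm.orthogonal ip I ∨ J = ⊤) := by
  have cyc : ∀ a b c : V, f a b c = f b c a := by
    intro a b c
    rw [hA1 a b c, hA2 b a c, neg_neg]
  have nondeg : LinearMap.BilinForm.Nondegenerate ip :=
    ⟨hipnondeg, fun y hy => hipnondeg y (fun x => by rw [hipsymm]; exact hy x)⟩
  have hrefl : LinearMap.IsRefl ip := by
    intro x y h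
    rw [hipsymm]; exact h
  refine ⟨metric_threeLie_orth_ideal_aux f hA1 hA2 ip hipsymm hipinv I hI, ?_, ?_⟩
  · -- centraliser property
    intro u hu v hv x
    apply hipnondeg
    intro w
    have h1 : f u v x = f v x u := cyc u v x
    have h2 := hipinv v x u w
    have h3 := hipsymm u (f v x w)
    have h4 : f v x w ∈ I := hI v hv x w
    have h5 : ip (f v x w) u = 0 := hu _ h4
    rw [h1]
    linarith
  · -- maximality
    rintro ⟨hIbot, hmin⟩ J hJideal hJle
    have hJo := metric_threeLie_orth_ideal_aux f hA1 hA2 ip hipsymm hipinv J hJideal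
    have hJoI : LinearMap.BilinForm.orthogonal ip J ≤ I := by
      have h := LinearMap.BilinForm.orthogonal_le (B := ip) hJle
      rwa [LinearMap.BilinForm.orthogonal_orthogonal nondeg hrefl] at h
    rcases hmin _ hJo hJoI with h | h
    · right
      have h2 := congrArg (LinearMap.BilinForm.orthogonal ip) h
      rwa [LinearMap.BilinForm.orthogonal_orthogonal nondeg hrefl,
        LinearMap.BilinForm.orthogonal_bot] at h2
    · left
      have h2 := congrArg (LinearMap.BilinForm.orthogonal ip) h
      rwa [LinearMap.BilinForm.orthogonal_orthogonal nondeg hrefl] at h2
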